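/- Let f : S^1 → ℝ be a continuous circle mapping with V^p(f) < ∞ for some p ≥ 1, and write v = V^p(f). Then there exists a homeomorphism τ : S^1 → S^1 such that f∘τ is (1/p)-Hölder; indeed |f∘τ(a) − f∘τ(b)| ≤ (2v)^{1/p}·|a − b|^{1/p} for all a, b. -/

import Mathlib

open Set Filter Metric Topology
open scoped ENNReal NNReal

noncomputable section

/-- A partition of `[0,1]` with `n+1` points `0 ≤ x₀ < x₁ < ⋯ < xₙ ≤ 1`. -/
def IsPartition (n : ℕ) (x : Fin (n + 1) → ℝ) : Prop :=
  StrictMono x ∧ ∀ i, x i ∈ Set.Icc (0 : ℝ) 1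

/-- The variational sum `∑ |f(xᵢ) - f(xᵢ₊₁)|^p` of `f` along a partition. -/
def varSum (f : ℝ → ℝ) (p : ℝ) (n : ℕ) (x : Fin (n + 1) → ℝ) : ℝ :=
  ∑ i : Fin n, |f (x i.castSucc) - f (x i.succ)| ^ p

/-- The `p`-variation `V^p(f)` of `f` over `[0,1]`. -/
def pVar (f : ℝ → ℝ) (p : ℝ) : ℝ≥0∞ :=
  ⨆ (n : ℕ) (x : Fin (n + 1) → ℝ) (_ : IsPartition n x), ENNReal.ofReal (varSum f p n x)

/-- The variation index `I(f) = sup {p ≥ 1 | V^p(f) = ∞}` (with `sup ∅ = 1`). -/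
def varIndex (f : ℝ → ℝ) : ℝ≥0∞ :=
  1 ⊔ ⨆ (p : ℝ) (_ : 1 ≤ p) (_ : pVar f p = ⊤), ENNReal.ofReal p

/-- The `(p,r)`-variation `V_r^p(f)`: the supremum of variational sums over partitions
all of whose increments satisfy `|f(xᵢ) - f(xᵢ₊₁)| = r`. -/
def prVar (f : ℝ → ℝ) (p r : ℝ) : ℝ≥0∞ :=
  ⨆ (n : ℕ) (x : Fin (n + 1) → ℝ) (_ : IsPartition n x)
    (_ : ∀ i : Fin n, |f (x i.castSucc) - f (x i.succ)| = r),
    ENNReal.ofReal (varSum f p n x)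

/-- The upper variation content `V̄^p(f) = limsup_{r→0⁺} V_r^p(f)`. -/
def uVarContent (f : ℝ → ℝ) (p : ℝ) : ℝ≥0∞ :=
  limsup (fun r => prVar f p r) (𝓝[>] (0 : ℝ))

/-- The lower variation content `V̲^p(f) = liminf_{r→0⁺} V_r^p(f)`. -/
def lVarContent (f : ℝ → ℝ) (p : ℝ) : ℝ≥0∞ :=
  liminf (fun r => prVar f p r) (𝓝[>] (0 : ℝ))

/-- The upper variation index `Ī(f) = sup {p ≥ 1 | V̄^p(f) = ∞}` (with `sup ∅ = 1`). -/
def upperVarIndex (f : ℝ → ℝ) : ℝ≥0∞ :=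
  1 ⊔ ⨆ (p : ℝ) (_ : 1 ≤ p) (_ : uVarContent f p = ⊤), ENNReal.ofReal p

/-- The lower variation index `I̲(f) = sup {p ≥ 1 | V̲^p(f) = ∞}` (with `sup ∅ = 1`). -/
def lowerVarIndex (f : ℝ → ℝ) : ℝ≥0∞ :=
  1 ⊔ ⨆ (p : ℝ) (_ : 1 ≤ p) (_ : lVarContent f p = ⊤), ENNReal.ofReal p

/-- The tree pseudometric `d_f(x,y) = f x + f y - 2 min_{[x∧y, x∨y]} f`. -/
def treeDist (f : ℝ → ℝ) (x y : ℝ) : ℝ :=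
  f x + f y - 2 * sInf (f '' Set.uIcc x y)

/-- The maximal cardinality of an `r`-separated subset of `A` with respect to the
(pseudo)distance `d`. -/
def Nsep {X : Type*} (d : X → X → ℝ) (A : Set X) (r : ℝ) : ℕ :=
  sSup {n | ∃ s : Finset X, (s : Set X) ⊆ A ∧ s.card = n ∧
    ∀ x ∈ s, ∀ y ∈ s, x ≠ y → r < d x y}

/-- Upper box dimension associated with a counting function `N`. -/
def ubdOf (N : ℝ → ℕ) : ℝ≥0∞ :=
  limsup (fun r : ℝ => ENNReal.ofReal (Real.log (N r : ℝ) / (-Real.log r))) (𝓝[>] (0 : ℝ))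

/-- Lower box dimension associated with a counting function `N`. -/
def lbdOf (N : ℝ → ℕ) : ℝ≥0∞ :=
  liminf (fun r : ℝ => ENNReal.ofReal (Real.log (N r : ℝ) / (-Real.log r))) (𝓝[>] (0 : ℝ))

/-- Upper box dimension of the real tree `T(g)` of an excursion `g`, computed through
`r`-separated subsets of `([0,1], d_g)` (these correspond exactly to `r`-separated subsets
of the metric quotient `T(g)`). -/
def ubdTree (g : ℝ → ℝ) : ℝ≥0∞ := ubdOf (fun r => Nsep (treeDist g) (Set.Icc 0 1) r)

/-- Lower box dimension of the real tree `T(g)` of an excursion `g`. -/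
def lbdTree (g : ℝ → ℝ) : ℝ≥0∞ := lbdOf (fun r => Nsep (treeDist g) (Set.Icc 0 1) r)

/-- The modified upper box dimension of the real tree `T(g)`:
the infimum over countable covers of `sup_i ubd`. -/
def umbdTree (g : ℝ → ℝ) : ℝ≥0∞ :=
  ⨅ (U : ℕ → Set ℝ) (_ : Set.Icc (0 : ℝ) 1 ⊆ ⋃ i, U i),
    ⨆ i, ubdOf (fun r => Nsep (treeDist g) (U i ∩ Set.Icc 0 1) r)

/-- The graph `Γ(g) = {(x, g x) | x ∈ [0,1]} ⊆ ℝ²`. -/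
def graphSet (g : ℝ → ℝ) : Set (ℝ × ℝ) := {q | ∃ x ∈ Set.Icc (0 : ℝ) 1, q = (x, g x)}

/-- Upper box dimension of the graph of `g` over `[0,1]`. -/
def ubdGraph (g : ℝ → ℝ) : ℝ≥0∞ :=
  ubdOf (fun r => Nsep (fun u v : ℝ × ℝ => dist u v) (graphSet g) r)

/-- `τ : ℝ → ℝ` is a lift of a homeomorphism of the circle `S¹ = ℝ/ℤ`. -/
def IsCircleHomeoLift (τ : ℝ → ℝ) : Prop :=
  Continuous τ ∧ Function.Bijective τ ∧
    ((∀ x, τ (x + 1) = τ x + 1) ∨ (∀ x, τ (x + 1) = τ x - 1))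

end

noncomputable section

namespace TimeChange

def nSum (f : ℝ → ℝ) (p : ℝ) (n : ℕ) (y : ℕ → ℝ) : ℝ :=
  ∑ i ∈ Finset.range n, |f (y i) - f (y (i + 1))| ^ p

def part (s t : ℝ) (n : ℕ) (y : ℕ → ℝ) : Prop :=
  (∀ i, i < n → y i < y (i + 1)) ∧ ∀ i, i ≤ n → y i ∈ Set.Icc s t

def SS (f : ℝ → ℝ) (p : ℝ) (s t : ℝ) : Set ℝ :=
  {r | ∃ n y, part s t n y ∧ nSum f p n y = r}

def pvR (f : ℝ → ℝ) (p : ℝ) (s t : ℝ) : ℝ := sSup (SS f p s t)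

lemma part_mono {s t : ℝ} {n : ℕ} {y : ℕ → ℝ} (h : part s t n y) {i j : ℕ}
    (hij : i ≤ j) (hj : j ≤ n) : y i ≤ y j := by
  induction j with
  | zero => simp_all
  | succ k ih =>
    rcases Nat.lt_or_ge i (k + 1) with h1 | h2
    · exact (ih (by omega) (by omega)).trans (h.1 k (by omega)).le
    · have : i = k + 1 := by omega
      simp [this]

lemma nSum_nonneg (f : ℝ → ℝ) (p : ℝ) (n : ℕ) (y : ℕ → ℝ) : 0 ≤ nSum f p n y :=
  Finset.sum_nonneg fun _ _ => Real.rpow_nonneg (abs_nonneg _) p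

lemma ofReal_nSum_le_pVar {f : ℝ → ℝ} {p : ℝ} {n : ℕ} {y : ℕ → ℝ} (h : part 0 1 n y) :
    ENNReal.ofReal (nSum f p n y) ≤ pVar f p := by
  set x : Fin (n + 1) → ℝ := fun i => y i with hx
  have hpart : IsPartition n x := by
    constructor
    · intro i j hij
      have h1 : y (i : ℕ) ≤ y ((i : ℕ) + 1) := le_of_lt (h.1 i (by omega))
      have h2 : y ((i : ℕ) + 1) ≤ y (j : ℕ) := part_mono h (by exact hij) (by omega)
      calc x i = y (i : ℕ) := rfl
        _ < y ((i:ℕ)+1) := h.1 i (by omega)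
        _ ≤ y (j : ℕ) := h2
    · intro i; exact h.2 i (by omega)
  have hsum : varSum f p n x = nSum f p n y := by
    rw [varSum, nSum, ← Fin.sum_univ_eq_sum_range (fun i => |f (y i) - f (y (i + 1))| ^ p) n]
    apply Finset.sum_congr rfl
    intro i _
    simp [hx, Fin.coe_castSucc, Fin.val_succ]
  calc ENNReal.ofReal (nSum f p n y) = ENNReal.ofReal (varSum f p n x) := by rw [hsum]
    _ ≤ ⨆ (_ : IsPartition n x), ENNReal.ofReal (varSum f p n x) := le_iSup (fun _ : IsPartition n x => ENNReal.ofReal (varSum f p n x)) hpart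
    _ ≤ ⨆ (x' : Fin (n+1) → ℝ) (_ : IsPartition n x'), ENNReal.ofReal (varSum f p n x') :=
        le_iSup (fun x' => ⨆ (_ : IsPartition n x'), ENNReal.ofReal (varSum f p n x')) x
    _ ≤ pVar f p := le_iSup (fun n => ⨆ (x' : Fin (n+1) → ℝ) (_ : IsPartition n x'),
        ENNReal.ofReal (varSum f p n x')) n

lemma nSum_le_toReal {f : ℝ → ℝ} {p : ℝ} (hfin : pVar f p ≠ ⊤) {s t : ℝ} {n : ℕ} {y : ℕ → ℝ}
    (h : part s t n y) (hs : 0 ≤ s) (ht : t ≤ 1) : nSum f p n y ≤ (pVar f p).toReal := by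
  have h01 : part 0 1 n y :=
    ⟨h.1, fun i hi => ⟨hs.trans (h.2 i hi).1, (h.2 i hi).2.trans ht⟩⟩
  have := ENNReal.toReal_mono hfin (ofReal_nSum_le_pVar h01)
  rwa [ENNReal.toReal_ofReal (nSum_nonneg f p n y)] at this

lemma zero_mem_SS (f : ℝ → ℝ) (p : ℝ) {s t : ℝ} (hst : s ≤ t) : (0 : ℝ) ∈ SS f p s t :=
  ⟨0, fun _ => s, ⟨fun i hi => by omega, fun i _ => ⟨le_rfl, hst⟩⟩, by simp [nSum]⟩

lemma bddAbove_SS {f : ℝ → ℝ} {p : ℝ} (hfin : pVar f p ≠ ⊤) {s t : ℝ} (hs : 0 ≤ s)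
    (ht : t ≤ 1) : BddAbove (SS f p s t) := by
  refine ⟨(pVar f p).toReal, fun r hr => ?_⟩
  obtain ⟨n, y, hy, rfl⟩ := hr
  exact nSum_le_toReal hfin hy hs ht

lemma nSum_le_pvR {f : ℝ → ℝ} {p : ℝ} (hfin : pVar f p ≠ ⊤) {s t : ℝ} (hs : 0 ≤ s)
    (ht : t ≤ 1) {n : ℕ} {y : ℕ → ℝ} (h : part s t n y) : nSum f p n y ≤ pvR f p s t :=
  le_csSup (bddAbove_SS hfin hs ht) ⟨n, y, h, rfl⟩

lemma pvR_nonneg {f : ℝ → ℝ} {p : ℝ} (hfin : pVar f p ≠ ⊤) {s t : ℝ} (hs : 0 ≤ s)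
    (hst : s ≤ t) (ht : t ≤ 1) : 0 ≤ pvR f p s t :=
  le_csSup (bddAbove_SS hfin hs ht) (zero_mem_SS f p hst)

lemma pvR_le {f : ℝ → ℝ} {p : ℝ} {s t : ℝ} (hst : s ≤ t) {a : ℝ}
    (h : ∀ r ∈ SS f p s t, r ≤ a) : pvR f p s t ≤ a :=
  csSup_le ⟨0, zero_mem_SS f p hst⟩ h

lemma pvR_le_toReal {f : ℝ → ℝ} {p : ℝ} (hfin : pVar f p ≠ ⊤) {s t : ℝ} (hs : 0 ≤ s)
    (hst : s ≤ t) (ht : t ≤ 1) : pvR f p s t ≤ (pVar f p).toReal :=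
  pvR_le hst fun r hr => by obtain ⟨n, y, hy, rfl⟩ := hr; exact nSum_le_toReal hfin hy hs ht

lemma pvR_mono {f : ℝ → ℝ} {p : ℝ} (hfin : pVar f p ≠ ⊤) {s s' t t' : ℝ} (hs0 : 0 ≤ s)
    (hs : s ≤ s') (hst : s' ≤ t') (ht : t' ≤ t) (ht1 : t ≤ 1) :
    pvR f p s' t' ≤ pvR f p s t := by
  apply pvR_le hst
  intro r hr
  obtain ⟨n, y, hy, rfl⟩ := hr
  exact nSum_le_pvR hfin hs0 ht1 ⟨hy.1, fun i hi =>
    ⟨hs.trans (hy.2 i hi).1, (hy.2 i hi).2.trans ht⟩⟩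

lemma pvR_self (f : ℝ → ℝ) {p : ℝ} (s : ℝ) : pvR f p s s = 0 := by
  apply le_antisymm
  · apply pvR_le le_rfl
    rintro r ⟨n, y, hy, rfl⟩
    rcases Nat.eq_zero_or_pos n with rfl | hn
    · simp [nSum]
    · exfalso
      have h0 := hy.2 0 (by omega)
      have h1 := hy.2 1 (by omega)
      have := hy.1 0 hn
      have e0 : y 0 = s := le_antisymm h0.2 h0.1
      have e1 : y 1 = s := le_antisymm h1.2 h1.1
      rw [e0, e1] at this; exact lt_irrefl _ this
  · exact le_csSup ⟨0, fun r hr => by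
      obtain ⟨n, y, hy, rfl⟩ := hr
      rcases Nat.eq_zero_or_pos n with rfl | hn
      · simp [nSum]
      · exfalso
        have h0 := hy.2 0 (by omega)
        have h1 := hy.2 1 (by omega)
        have := hy.1 0 hn
        have e0 : y 0 = s := le_antisymm h0.2 h0.1
        have e1 : y 1 = s := le_antisymm h1.2 h1.1
        rw [e0, e1] at this; exact lt_irrefl _ this⟩ (zero_mem_SS f p le_rfl)

lemma pvR_add_le {f : ℝ → ℝ} {p : ℝ} (hp : 1 ≤ p) (hfin : pVar f p ≠ ⊤) {s t : ℝ}
    (hs : 0 ≤ s) (hst : s ≤ t) (ht : t ≤ 1) :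
    pvR f p 0 s + |f s - f t| ^ p ≤ pvR f p 0 t := by
  rcases eq_or_lt_of_le hst with rfl | hlt
  · simp only [sub_self, abs_zero]
    rw [Real.zero_rpow (by linarith : p ≠ 0), add_zero]
  · have key : ∀ r ∈ SS f p 0 s, r + |f s - f t| ^ p ≤ pvR f p 0 t := by
      rintro r ⟨n, y, hy, rfl⟩
      rcases eq_or_lt_of_le (hy.2 n le_rfl).2 with heq | hltn
      · -- y n = s : append t
        set y' : ℕ → ℝ := fun i => if i ≤ n then y i else t with hy'
        have hpart : part 0 t (n + 1) y' := by
          constructor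
          · intro i hi
            rcases Nat.lt_or_ge i n with h1 | h2
            · have e1 : y' i = y i := by simp [hy', (show i ≤ n by omega)]
              have e2 : y' (i + 1) = y (i + 1) := by simp [hy', (show i + 1 ≤ n by omega)]
              rw [e1, e2]; exact hy.1 i h1
            · have hin : i = n := by omega
              have e1 : y' i = y i := by simp [hy', (show i ≤ n by omega)]
              have e2 : y' (i + 1) = t := by simp [hy', (show ¬ (i + 1 ≤ n) by omega)]
              rw [e1, e2, hin, heq]; exact hlt
          · intro i hi
            by_cases hin : i ≤ n
            · have e1 : y' i = y i := by simp [hy', hin]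
              rw [e1]
              exact ⟨(hy.2 i hin).1, (hy.2 i hin).2.trans hst⟩
            · have e1 : y' i = t := by simp [hy', hin]
              rw [e1]; exact ⟨hs.trans hst, le_rfl⟩
        have hsum : nSum f p (n + 1) y' = nSum f p n y + |f s - f t| ^ p := by
          simp only [nSum]
          rw [Finset.sum_range_succ]
          congr 1
          · apply Finset.sum_congr rfl
            intro i hi
            have hi' := Finset.mem_range.mp hi
            have e1 : y' i = y i := by simp [hy', (show i ≤ n by omega)]
            have e2 : y' (i + 1) = y (i + 1) := by simp [hy', (show i + 1 ≤ n by omega)]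
            rw [e1, e2]
          · have e1 : y' n = y n := by simp [hy']
            have e2 : y' (n + 1) = t := by simp [hy']
            rw [e1, e2, heq]
        rw [← hsum]
        exact nSum_le_pvR hfin le_rfl ht hpart
      · -- y n < s : append s and t
        set y' : ℕ → ℝ := fun i => if i ≤ n then y i else if i = n + 1 then s else t with hy'
        have e1 : ∀ i ≤ n, y' i = y i := fun i hi => by simp [hy', hi]
        have e2 : y' (n + 1) = s := by simp [hy']
        have e3 : y' (n + 2) = t := by simp [hy', (show ¬ (n + 2 ≤ n) by omega)]
        have hpart : part 0 t (n + 2) y' := by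
          constructor
          · intro i hi
            rcases Nat.lt_or_ge i n with h1 | h2
            · rw [e1 i (by omega), e1 (i + 1) (by omega)]; exact hy.1 i h1
            · rcases Nat.eq_or_lt_of_le h2 with heq2 | h3
              · have hin : i = n := heq2.symm
                subst hin
                rw [e1 i le_rfl, e2]; exact hltn
              · have : i = n + 1 := by omega
                rw [this, e2, e3]; exact hlt
          · intro i hi
            rcases Nat.lt_or_ge n i with h1 | h2
            · rcases Nat.eq_or_lt_of_le (by omega : i ≤ n + 2) with rfl | h3
              · rw [e3]; exact ⟨hs.trans hst, le_rfl⟩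
              · have : i = n + 1 := by omega
                rw [this, e2]; exact ⟨hs, hst⟩
            · rw [e1 i h2]
              exact ⟨(hy.2 i h2).1, ((hy.2 i h2).2.trans hst)⟩
        have hsum : nSum f p (n + 2) y' =
            nSum f p n y + |f (y n) - f s| ^ p + |f s - f t| ^ p := by
          simp only [nSum]
          rw [Finset.sum_range_succ, Finset.sum_range_succ]
          congr 2
          · apply Finset.sum_congr rfl
            intro i hi
            have hi' := Finset.mem_range.mp hi
            rw [e1 i (by omega), e1 (i + 1) (by omega)]
          · rw [e1 n le_rfl, e2]
          · rw [e2, e3]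
        have := nSum_le_pvR hfin le_rfl ht hpart
        rw [hsum] at this
        have h0 : 0 ≤ |f (y n) - f s| ^ p := Real.rpow_nonneg (abs_nonneg _) p
        linarith
    have : pvR f p 0 s ≤ pvR f p 0 t - |f s - f t| ^ p :=
      csSup_le ⟨0, zero_mem_SS f p hs⟩ fun r hr => by linarith [key r hr]
    linarith

lemma pvR_eq_toReal {f : ℝ → ℝ} {p : ℝ} (hfin : pVar f p ≠ ⊤) :
    pvR f p 0 1 = (pVar f p).toReal := by
  apply le_antisymm (pvR_le_toReal hfin le_rfl zero_le_one le_rfl)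
  have hle : pVar f p ≤ ENNReal.ofReal (pvR f p 0 1) := by
    rw [pVar]
    refine iSup_le fun n => iSup_le fun x => iSup_le fun hx => ?_
    set y : ℕ → ℝ := fun i => x ⟨min i n, lt_of_le_of_lt (min_le_right i n) (Nat.lt_succ_self n)⟩
      with hy
    have hyi : ∀ i, ∀ _ : i ≤ n, y i = x ⟨i, Nat.lt_succ_of_le ‹_›⟩ := by
      intro i hi
      simp only [hy]
      congr 1
      exact Fin.ext (by simp [min_eq_left hi])
    have hpart : part 0 1 n y := by
      constructor
      · intro i hi
        rw [hyi i (by omega), hyi (i + 1) (by omega)]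
        exact hx.1 (Fin.mk_lt_mk.mpr (by omega))
      · intro i hi
        rw [hyi i hi]; exact hx.2 _
    have hsum : varSum f p n x = nSum f p n y := by
      rw [varSum, nSum, ← Fin.sum_univ_eq_sum_range (fun i => |f (y i) - f (y (i + 1))| ^ p) n]
      apply Finset.sum_congr rfl
      intro i _
      have ec : i.castSucc = (⟨min (i : ℕ) n, lt_of_le_of_lt (min_le_right _ n) (Nat.lt_succ_self n)⟩ : Fin (n+1)) := by
        apply Fin.ext; simp [min_eq_left (le_of_lt i.isLt)]
      have es : i.succ = (⟨min ((i : ℕ) + 1) n, lt_of_le_of_lt (min_le_right _ n) (Nat.lt_succ_self n)⟩ : Fin (n+1)) := by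
        apply Fin.ext; simp [min_eq_left (Nat.succ_le_of_lt i.isLt)]
      rw [ec, es]
    rw [hsum]
    exact ENNReal.ofReal_le_ofReal (nSum_le_pvR hfin le_rfl le_rfl hpart)
  have := ENNReal.toReal_mono (by simp) hle
  rwa [ENNReal.toReal_ofReal (pvR_nonneg hfin le_rfl zero_le_one le_rfl)] at this

lemma convex_incr {p : ℝ} (hp : 1 ≤ p) {A B M : ℝ} (hA : 0 ≤ A) (hB : 0 ≤ B) (hAM : A ≤ M) :
    (A + B) ^ p ≤ A ^ p + ((M + B) ^ p - M ^ p) := by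
  rcases eq_or_lt_of_le hAM with rfl | hlt
  · linarith
  rcases eq_or_lt_of_le hB with rfl | hBpos
  · simp
  have hD : 0 < M + B - A := by linarith
  set l : ℝ := B / (M + B - A) with hl
  have hl0 : 0 < l := div_pos hBpos hD
  have hl1 : l < 1 := (div_lt_one hD).mpr (by linarith)
  have cv := convexOn_rpow hp
  have hMB : (M + B) ∈ Set.Ici (0 : ℝ) := by
    simp only [Set.mem_Ici]; linarith
  have hAm : A ∈ Set.Ici (0 : ℝ) := hA
  have h1 := cv.2 hAm hMB (by linarith : (0:ℝ) ≤ 1 - l) hl0.le (by ring)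
  have h2 := cv.2 hAm hMB hl0.le (by linarith : (0:ℝ) ≤ 1 - l) (by ring)
  have hlD : l * (M + B - A) = B := by rw [hl]; exact div_mul_cancel₀ B hD.ne'
  have e1 : (1 - l) • A + l • (M + B) = A + B := by
    simp only [smul_eq_mul]; linear_combination hlD
  have e2 : l • A + (1 - l) • (M + B) = M := by
    simp only [smul_eq_mul]; linear_combination (-1 : ℝ) * hlD
  rw [e1] at h1
  rw [e2] at h2
  simp only [smul_eq_mul] at h1 h2
  nlinarith [h1, h2]

lemma glue {f : ℝ → ℝ} {p : ℝ} (hfin : pVar f p ≠ ⊤) {a b c : ℝ} (ha : 0 ≤ a)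
    (hab : a ≤ b) (hbc : b ≤ c) (hc : c ≤ 1) :
    pvR f p a b + pvR f p b c ≤ pvR f p a c := by
  have key : ∀ r1 ∈ SS f p a b, ∀ r2 ∈ SS f p b c, r1 + r2 ≤ pvR f p a c := by
    rintro r1 ⟨n, y, hy, rfl⟩ r2 ⟨m, z, hz, rfl⟩
    have hynz0 : y n ≤ z 0 := le_trans (hy.2 n le_rfl).2 (hz.2 0 (by omega)).1
    rcases eq_or_lt_of_le hynz0 with heq | hlt
    · -- merge case : y n = z 0
      set w : ℕ → ℝ := fun i => if i < n then y i else z (i - n) with hw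
      have hw1 : ∀ i, i < n → w i = y i := fun i hi => by simp [hw, hi]
      have hw2 : ∀ i, n ≤ i → w i = z (i - n) := fun i hi => by
        simp [hw, (show ¬ i < n by omega)]
      have hw1' : ∀ i, i ≤ n → w i = y i := by
        intro i hi
        rcases Nat.lt_or_ge i n with h1 | h2
        · exact hw1 i h1
        · have : i = n := by omega
          subst this
          rw [hw2 i le_rfl, Nat.sub_self, ← heq]
      have hpart : part a c (n + m) w := by
        constructor
        · intro i hi
          rcases Nat.lt_or_ge i n with h1 | h2
          · rw [hw1 i h1, hw1' (i + 1) (by omega)]; exact hy.1 i h1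
          · rw [hw2 i h2, hw2 (i + 1) (by omega)]
            have : i + 1 - n = (i - n) + 1 := by omega
            rw [this]
            exact hz.1 (i - n) (by omega)
        · intro i hi
          rcases Nat.lt_or_ge i n with h1 | h2
          · rw [hw1 i h1]
            exact ⟨(hy.2 i (by omega)).1, ((hy.2 i (by omega)).2.trans hbc)⟩
          · rw [hw2 i h2]
            exact ⟨hab.trans (hz.2 (i - n) (by omega)).1, (hz.2 (i - n) (by omega)).2⟩
      have hsum : nSum f p (n + m) w = nSum f p n y + nSum f p m z := by
        simp only [nSum]
        rw [Finset.sum_range_add]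
        congr 1
        · apply Finset.sum_congr rfl
          intro i hi
          have hi' := Finset.mem_range.mp hi
          rw [hw1 i hi', hw1' (i + 1) (by omega)]
        · apply Finset.sum_congr rfl
          intro i hi
          have hi' := Finset.mem_range.mp hi
          rw [hw2 (n + i) (by omega), hw2 (n + i + 1) (by omega)]
          have e1 : n + i - n = i := by omega
          have e2 : n + i + 1 - n = i + 1 := by omega
          rw [e1, e2]
      rw [← hsum]
      exact nSum_le_pvR hfin ha hc hpart
    · -- strict case : y n < z 0
      set w : ℕ → ℝ := fun i => if i ≤ n then y i else z (i - (n + 1)) with hw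
      have hw1 : ∀ i, i ≤ n → w i = y i := fun i hi => by simp [hw, hi]
      have hw2 : ∀ i, n + 1 ≤ i → w i = z (i - (n + 1)) := fun i hi => by
        simp [hw, (show ¬ i ≤ n by omega)]
      have hpart : part a c (n + (m + 1)) w := by
        constructor
        · intro i hi
          rcases Nat.lt_or_ge i n with h1 | h2
          · rw [hw1 i (by omega), hw1 (i + 1) (by omega)]; exact hy.1 i h1
          · rcases Nat.eq_or_lt_of_le h2 with heq2 | h3
            · have hin : i = n := heq2.symm
              subst hin
              rw [hw1 i le_rfl, hw2 (i + 1) (by omega), Nat.sub_self]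
              exact hlt
            · rw [hw2 i (by omega), hw2 (i + 1) (by omega)]
              have e : i + 1 - (n + 1) = (i - (n + 1)) + 1 := by omega
              rw [e]
              exact hz.1 (i - (n + 1)) (by omega)
        · intro i hi
          rcases Nat.lt_or_ge n i with h1 | h2
          · rw [hw2 i (by omega)]
            exact ⟨hab.trans (hz.2 (i - (n + 1)) (by omega)).1,
              (hz.2 (i - (n + 1)) (by omega)).2⟩
          · rw [hw1 i h2]
            exact ⟨(hy.2 i h2).1, ((hy.2 i h2).2.trans hbc)⟩
      have hsum : nSum f p (n + (m + 1)) w =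
          nSum f p n y + (|f (y n) - f (z 0)| ^ p + nSum f p m z) := by
        simp only [nSum]
        rw [Finset.sum_range_add]
        congr 1
        · apply Finset.sum_congr rfl
          intro i hi
          have hi' := Finset.mem_range.mp hi
          rw [hw1 i (by omega), hw1 (i + 1) (by omega)]
        · rw [Finset.sum_range_succ']
          rw [add_comm]
          congr 1
          · rw [hw1 (n + 0) (by omega), hw2 (n + 0 + 1) (by omega)]
            have e1 : n + 0 + 1 - (n + 1) = 0 := by omega
            rw [e1]
            norm_num
          · apply Finset.sum_congr rfl
            intro i hi
            have hi' := Finset.mem_range.mp hi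
            rw [hw2 (n + (i + 1)) (by omega), hw2 (n + (i + 1) + 1) (by omega)]
            have e1 : n + (i + 1) - (n + 1) = i := by omega
            have e2 : n + (i + 1) + 1 - (n + 1) = i + 1 := by omega
            rw [e1, e2]
      have hle := nSum_le_pvR hfin ha hc hpart
      rw [hsum] at hle
      have h0 : 0 ≤ |f (y n) - f (z 0)| ^ p := Real.rpow_nonneg (abs_nonneg _) p
      linarith
  have h2 : ∀ r1 ∈ SS f p a b, pvR f p b c ≤ pvR f p a c - r1 := fun r1 h1 =>
    csSup_le ⟨0, zero_mem_SS f p hbc⟩ fun r2 hr2 => by linarith [key r1 h1 r2 hr2]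
  have h3 : pvR f p a b ≤ pvR f p a c - pvR f p b c :=
    csSup_le ⟨0, zero_mem_SS f p hab⟩ fun r1 h1 => by linarith [h2 r1 h1]
  linarith

lemma two_point {f : ℝ → ℝ} {p : ℝ} (hp : 1 ≤ p) (hfin : pVar f p ≠ ⊤) {s x y : ℝ}
    (hs : 0 ≤ s) {t : ℝ} (ht : t ≤ 1) (hx : x ∈ Set.Icc s t) (hy : y ∈ Set.Icc s t) :
    |f x - f y| ^ p ≤ pvR f p s t := by
  rcases eq_or_ne x y with rfl | hne
  · simp only [sub_self, abs_zero]
    rw [Real.zero_rpow (by linarith : p ≠ 0)]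
    exact pvR_nonneg hfin hs (hx.1.trans hx.2) ht
  · set u := min x y
    set w := max x y
    have huw : u < w := by
      rcases lt_or_gt_of_ne hne with h | h
      · simp [u, w, min_eq_left h.le, max_eq_right h.le, h]
      · simp [u, w, min_eq_right h.le, max_eq_left h.le, h]
    set Y : ℕ → ℝ := fun i => if i = 0 then u else w with hY
    have hpart : part s t 1 Y := by
      constructor
      · intro i hi
        have : i = 0 := by omega
        subst this
        simp only [hY]
        norm_num
        exact huw
      · intro i hi
        by_cases h0 : i = 0
        · subst h0
          simp only [hY, if_pos rfl]
          exact ⟨le_min hx.1 hy.1, (min_le_left x y).trans hx.2⟩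
        · simp only [hY, if_neg h0]
          exact ⟨(le_min hx.1 hy.1).trans huw.le, max_le hx.2 hy.2⟩
    have hsum : nSum f p 1 Y = |f u - f w| ^ p := by
      simp [nSum, hY]
    have habs : |f u - f w| = |f x - f y| := by
      rcases le_total x y with h | h
      · simp [u, w, min_eq_left h, max_eq_right h, abs_sub_comm]
      · simp [u, w, min_eq_right h, max_eq_left h, abs_sub_comm]
    have := nSum_le_pvR hfin hs ht hpart
    rw [hsum, habs] at this
    exact this

lemma left_approx {f : ℝ → ℝ} {p : ℝ} (hf : Continuous f) (hp : 1 ≤ p)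
    (hfin : pVar f p ≠ ⊤) {t : ℝ} (ht0 : 0 < t) (ht1 : t ≤ 1) {ε : ℝ} (hε : 0 < ε) :
    ∃ s, 0 ≤ s ∧ s < t ∧ pvR f p 0 t ≤ pvR f p 0 s + ε := by
  by_cases hsmall : pvR f p 0 t ≤ ε
  · refine ⟨0, le_rfl, ht0, ?_⟩
    rw [pvR_self]
    linarith
  push_neg at hsmall
  obtain ⟨r, hrS, hrgt⟩ := exists_lt_of_lt_csSup ⟨0, zero_mem_SS f p ht0.le⟩
    (show pvR f p 0 t - ε / 2 < pvR f p 0 t by linarith)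
  obtain ⟨n, y, hy, rfl⟩ := hrS
  rcases Nat.eq_zero_or_pos n with rfl | hn
  · exfalso
    have : nSum f p 0 y = 0 := by simp [nSum]
    rw [this] at hrgt
    linarith
  obtain ⟨m, rfl⟩ : ∃ m, n = m + 1 := ⟨n - 1, by omega⟩
  rcases eq_or_lt_of_le (hy.2 (m + 1) le_rfl).2 with heq | hlast
  · -- y (m+1) = t : move the last point
    set a := y m with hadef
    have ham : a < t := by rw [hadef, ← heq]; exact hy.1 m (by omega)
    have ha0 : 0 ≤ a := (hy.2 m (by omega)).1
    have hcont : ContinuousAt (fun s => |f a - f s| ^ p) t := by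
      apply ContinuousAt.rpow_const
      · exact ((continuous_const.sub hf).abs).continuousAt
      · right; linarith
    have htend := Metric.continuousAt_iff.mp hcont (ε / 2) (by linarith)
    obtain ⟨δ, hδ0, hδ⟩ := htend
    set s := max ((a + t) / 2) (t - δ / 2) with hsdef
    have hs_lt : s < t := by
      apply max_lt
      · linarith
      · linarith
    have hs_gt : a < s := lt_of_lt_of_le (by linarith) (le_max_left _ _)
    have hs0 : 0 ≤ s := ha0.trans hs_gt.le
    have hsδ : dist s t < δ := by
      rw [Real.dist_eq, abs_of_nonpos (by linarith)]
      have := le_max_right ((a + t) / 2) (t - δ / 2)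
      simp only [hsdef] at *
      linarith [le_max_right ((a + t) / 2) (t - δ / 2)]
    have hclose := hδ hsδ
    rw [Real.dist_eq] at hclose
    set y' : ℕ → ℝ := fun i => if i = m + 1 then s else y i with hy'
    have e1 : ∀ i ≤ m, y' i = y i := fun i hi => by
      simp [hy', (show ¬ i = m + 1 by omega)]
    have e2 : y' (m + 1) = s := by simp [hy']
    have hpart : part 0 s (m + 1) y' := by
      constructor
      · intro i hi
        rcases Nat.lt_or_ge i m with h1 | h2
        · rw [e1 i (by omega), e1 (i + 1) (by omega)]; exact hy.1 i (by omega)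
        · have : i = m := by omega
          subst this
          rw [e1 i le_rfl, e2]
          exact hs_gt
      · intro i hi
        rcases Nat.lt_or_ge i (m + 1) with h1 | h2
        · rw [e1 i (by omega)]
          refine ⟨(hy.2 i (by omega)).1, ?_⟩
          calc y i ≤ y m := part_mono hy (by omega) (by omega)
            _ ≤ s := hs_gt.le
        · have : i = m + 1 := by omega
          subst this
          rw [e2]
          exact ⟨hs0, le_rfl⟩
    have hsum : nSum f p (m + 1) y' = nSum f p (m + 1) y
        - |f a - f t| ^ p + |f a - f s| ^ p := by
      simp only [nSum]
      rw [Finset.sum_range_succ, Finset.sum_range_succ]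
      have : ∀ i ∈ Finset.range m, |f (y' i) - f (y' (i + 1))| ^ p
          = |f (y i) - f (y (i + 1))| ^ p := by
        intro i hi
        have hi' := Finset.mem_range.mp hi
        rw [e1 i (by omega), e1 (i + 1) (by omega)]
      rw [Finset.sum_congr rfl this, e1 m le_rfl, e2, ← hadef, heq]
      ring
    have hfin2 : |f a - f s| ^ p ≥ |f a - f t| ^ p - ε / 2 := by
      have := abs_lt.mp hclose
      linarith [this.1]
    have hle := nSum_le_pvR hfin le_rfl (hs_lt.le.trans ht1) hpart
    refine ⟨s, hs0, hs_lt, ?_⟩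
    rw [hsum] at hle
    linarith
  · -- y (m+1) < t
    refine ⟨y (m + 1), (hy.2 (m + 1) le_rfl).1, hlast, ?_⟩
    have hpart : part 0 (y (m + 1)) (m + 1) y :=
      ⟨hy.1, fun i hi => ⟨(hy.2 i hi).1, part_mono hy hi le_rfl⟩⟩
    have hle := nSum_le_pvR hfin le_rfl (hlast.le.trans ht1) hpart
    linarith

lemma rpow_root_le {p A C : ℝ} (hp : 1 ≤ p) (hA : 0 ≤ A) (hC : 0 ≤ C)
    (h : A ^ p ≤ C) : A ≤ C ^ (1 / p) := by
  have hp0 : p ≠ 0 := by linarith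
  have := Real.rpow_le_rpow (Real.rpow_nonneg hA p) h (by positivity : (0:ℝ) ≤ 1 / p)
  rw [one_div] at this ⊢
  rwa [Real.rpow_rpow_inv hA hp0] at this

lemma right_split {f : ℝ → ℝ} {p : ℝ} (hf : Continuous f) (hp : 1 ≤ p)
    (hfin : pVar f p ≠ ⊤) {t : ℝ} (ht0 : 0 ≤ t) (ht1 : t < 1) {ε : ℝ} (hε : 0 < ε) :
    ∃ δ > 0, ∀ u, t < u → u ≤ 1 → u ≤ t + δ →
      pvR f p 0 u ≤ pvR f p 0 t + pvR f p t u + ε := by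
  set v := (pVar f p).toReal with hv
  have hv0 : 0 ≤ v := ENNReal.toReal_nonneg
  set M := v ^ (1 / p) with hM
  have hM0 : 0 ≤ M := Real.rpow_nonneg hv0 _
  -- control of the error term
  have hcont : ContinuousAt (fun B => (M + B) ^ p) 0 := by
    apply ContinuousAt.rpow_const
    · exact (continuous_const.add continuous_id).continuousAt
    · right; linarith
  obtain ⟨B₀, hB₀0, hB₀⟩ := Metric.continuousAt_iff.mp hcont ε (by linarith)
  -- continuity of f at t
  obtain ⟨δ₁, hδ₁0, hδ₁⟩ := Metric.continuousAt_iff.mp hf.continuousAt B₀ hB₀0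
  refine ⟨δ₁ / 2, by linarith, ?_⟩
  intro u htu hu1 huδ
  apply pvR_le (by linarith : (0:ℝ) ≤ u)
  rintro r ⟨n, y, hy, rfl⟩
  have hpvtu0 : 0 ≤ pvR f p t u := pvR_nonneg hfin ht0 htu.le hu1
  have hpv0t0 : 0 ≤ pvR f p 0 t := pvR_nonneg hfin le_rfl ht0 (by linarith)
  by_cases hall : ∀ i ≤ n, y i ≤ t
  · have hpart : part 0 t n y := ⟨hy.1, fun i hi => ⟨(hy.2 i hi).1, hall i hi⟩⟩
    have := nSum_le_pvR hfin le_rfl (by linarith) hpart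
    linarith
  by_cases h0t : t < y 0
  · have hpart : part t u n y := ⟨hy.1, fun i hi =>
      ⟨h0t.le.trans (part_mono hy (by omega) hi), (hy.2 i hi).2⟩⟩
    have := nSum_le_pvR hfin ht0 hu1 hpart
    linarith
  push_neg at hall h0t
  obtain ⟨i₀, hi₀n, hi₀⟩ := hall
  classical
  have hex : ∃ i, t < y i := ⟨i₀, hi₀⟩
  set k := Nat.find hex with hk
  have hyk : t < y k := Nat.find_spec hex
  have hkpos : 1 ≤ k := by
    rcases Nat.eq_zero_or_pos k with h | h
    · exfalso; rw [h] at hyk; linarith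
    · exact h
  have hkn : k ≤ n := le_trans (Nat.find_le hi₀) hi₀n
  set j := k - 1 with hj
  have hjk : j + 1 = k := by omega
  have hjn : j < n := by omega
  have hyj : y j ≤ t := by
    have := Nat.find_min hex (show j < k by omega)
    linarith [not_lt.mp this]
  have hyj1 : t < y (j + 1) := by rw [hjk]; exact hyk
  set A := |f (y j) - f t| with hA
  set B := |f t - f (y (j + 1))| with hB
  have hA0 : 0 ≤ A := abs_nonneg _
  have hB0 : 0 ≤ B := abs_nonneg _
  have hyj0 : 0 ≤ y j := (hy.2 j (by omega)).1
  have hAM : A ≤ M := by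
    apply rpow_root_le hp hA0 hv0
    rw [hv, ← pvR_eq_toReal hfin]
    exact two_point hp hfin le_rfl le_rfl ⟨hyj0, hyj.trans (by linarith)⟩
      ⟨ht0, ht1.le⟩
  have hBsmall : B < B₀ := by
    have hd : dist (y (j + 1)) t < δ₁ := by
      rw [Real.dist_eq, abs_of_nonneg (by linarith)]
      have := (hy.2 (j + 1) (by omega)).2
      linarith
    have := hδ₁ hd
    rw [Real.dist_eq] at this
    rw [hB, abs_sub_comm]
    exact this
  have herr : (M + B) ^ p - M ^ p ≤ ε := by
    have hd : dist B 0 < B₀ := by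
      rw [Real.dist_eq, sub_zero, abs_of_nonneg hB0]; exact hBsmall
    have := hB₀ hd
    rw [Real.dist_eq] at this
    have h1 : (M + B) ^ p - (M + 0) ^ p ≤ ε := by
      have := abs_lt.mp this
      linarith [this.2]
    rw [add_zero] at h1
    exact h1
  -- split the sum
  set m := n - (j + 1) with hm
  have hnm : n = (j + 1) + m := by omega
  have hsplit : nSum f p n y = (∑ i ∈ Finset.range j, |f (y i) - f (y (i + 1))| ^ p)
      + |f (y j) - f (y (j + 1))| ^ p
      + (∑ i ∈ Finset.range m, |f (y (j + 1 + i)) - f (y (j + 1 + i + 1))| ^ p) := by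
    rw [nSum, hnm, Finset.sum_range_add, Finset.sum_range_succ]
  -- claim 1
  have hclaim1 : (∑ i ∈ Finset.range j, |f (y i) - f (y (i + 1))| ^ p) + A ^ p
      ≤ pvR f p 0 t := by
    rcases eq_or_lt_of_le hyj with heq | hlt
    · -- y j = t
      have hA0' : A = 0 := by rw [hA, heq]; simp
      set yL : ℕ → ℝ := fun i => y (min i j) with hyL
      have eL : ∀ i ≤ j, yL i = y i := fun i hi => by simp [hyL, min_eq_left hi]
      have hpart : part 0 t j yL := by
        constructor
        · intro i hi
          rw [eL i (by omega), eL (i + 1) (by omega)]; exact hy.1 i (by omega)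
        · intro i hi
          rw [eL i hi]
          exact ⟨(hy.2 i (by omega)).1, heq ▸ part_mono hy hi (by omega)⟩
      have hle := nSum_le_pvR hfin le_rfl (by linarith) hpart
      have hsum : nSum f p j yL = ∑ i ∈ Finset.range j, |f (y i) - f (y (i + 1))| ^ p := by
        rw [nSum]
        apply Finset.sum_congr rfl
        intro i hi
        have hi' := Finset.mem_range.mp hi
        rw [eL i (by omega), eL (i + 1) (by omega)]
      rw [hA0', Real.zero_rpow (by linarith : p ≠ 0), add_zero, ← hsum]
      exact hle
    · -- y j < t
      set yL : ℕ → ℝ := fun i => if i ≤ j then y i else t with hyL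
      have eL : ∀ i ≤ j, yL i = y i := fun i hi => by simp [hyL, hi]
      have eL2 : yL (j + 1) = t := by simp [hyL]
      have hpart : part 0 t (j + 1) yL := by
        constructor
        · intro i hi
          rcases Nat.lt_or_ge i j with h1 | h2
          · rw [eL i (by omega), eL (i + 1) (by omega)]; exact hy.1 i (by omega)
          · have hij : i = j := by omega
            rw [hij, eL j le_rfl, eL2]; exact hlt
        · intro i hi
          rcases Nat.lt_or_ge i (j + 1) with h1 | h2
          · rw [eL i (by omega)]
            exact ⟨(hy.2 i (by omega)).1, (part_mono hy (by omega) (by omega)).trans hlt.le⟩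
          · have hij : i = j + 1 := by omega
            rw [hij, eL2]; exact ⟨ht0, le_rfl⟩
      have hle := nSum_le_pvR hfin le_rfl (by linarith) hpart
      have hsum : nSum f p (j + 1) yL
          = (∑ i ∈ Finset.range j, |f (y i) - f (y (i + 1))| ^ p) + A ^ p := by
        rw [nSum, Finset.sum_range_succ]
        congr 1
        · apply Finset.sum_congr rfl
          intro i hi
          have hi' := Finset.mem_range.mp hi
          rw [eL i (by omega), eL (i + 1) (by omega)]
        · rw [eL j le_rfl, eL2]
      rw [← hsum]
      exact hle
  -- claim 2
  have hclaim2 : B ^ p + (∑ i ∈ Finset.range m, |f (y (j + 1 + i)) - f (y (j + 1 + i + 1))| ^ p)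
      ≤ pvR f p t u := by
    set yR : ℕ → ℝ := fun i => if i = 0 then t else y (j + i) with hyR
    have eR0 : yR 0 = t := by simp [hyR]
    have eR : ∀ i, 1 ≤ i → yR i = y (j + i) := fun i hi => by
      simp [hyR, (show ¬ i = 0 by omega)]
    have hpart : part t u (m + 1) yR := by
      constructor
      · intro i hi
        rcases Nat.eq_zero_or_pos i with rfl | h1
        · rw [eR0, eR 1 le_rfl]
          exact hyj1
        · rw [eR i h1, eR (i + 1) (by omega)]
          have e : j + (i + 1) = (j + i) + 1 := by omega
          rw [e]
          exact hy.1 (j + i) (by omega)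
      · intro i hi
        rcases Nat.eq_zero_or_pos i with rfl | h1
        · rw [eR0]; exact ⟨le_rfl, htu.le⟩
        · rw [eR i h1]
          constructor
          · exact hyj1.le.trans (part_mono hy (by omega) (by omega))
          · exact (hy.2 (j + i) (by omega)).2
    have hle := nSum_le_pvR hfin ht0 hu1 hpart
    have hsum : nSum f p (m + 1) yR = B ^ p
        + (∑ i ∈ Finset.range m, |f (y (j + 1 + i)) - f (y (j + 1 + i + 1))| ^ p) := by
      have hterm0 : |f (yR 0) - f (yR (0 + 1))| ^ p = B ^ p := by
        rw [eR0, show (0:ℕ) + 1 = 1 from rfl, eR 1 le_rfl, hB]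
      have hrest : ∀ i ∈ Finset.range m, |f (yR (i + 1)) - f (yR (i + 1 + 1))| ^ p
          = |f (y (j + 1 + i)) - f (y (j + 1 + i + 1))| ^ p := by
        intro i hi
        rw [eR (i + 1) (by omega), eR (i + 1 + 1) (by omega)]
        have e1 : j + (i + 1) = j + 1 + i := by omega
        have e2 : j + (i + 1 + 1) = j + 1 + i + 1 := by omega
        rw [e1, e2]
      rw [nSum, Finset.sum_range_succ', Finset.sum_congr rfl hrest, hterm0, add_comm]
    rw [← hsum]
    exact hle
  -- claim 3
  have hABle : |f (y j) - f (y (j + 1))| ≤ A + B := by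
    calc |f (y j) - f (y (j + 1))| = |(f (y j) - f t) + (f t - f (y (j + 1)))| := by ring_nf
      _ ≤ |f (y j) - f t| + |f t - f (y (j + 1))| := abs_add_le _ _
  have hclaim3 : |f (y j) - f (y (j + 1))| ^ p ≤ A ^ p + ε := by
    calc |f (y j) - f (y (j + 1))| ^ p ≤ (A + B) ^ p :=
          Real.rpow_le_rpow (abs_nonneg _) hABle (by linarith)
      _ ≤ A ^ p + ((M + B) ^ p - M ^ p) := convex_incr hp hA0 hB0 hAM
      _ ≤ A ^ p + ε := by linarith
  have hBp0 : 0 ≤ B ^ p := Real.rpow_nonneg hB0 p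
  rw [hsplit]
  linarith

lemma small_var {f : ℝ → ℝ} {p : ℝ} (hf : Continuous f) (hp : 1 ≤ p)
    (hfin : pVar f p ≠ ⊤) {t : ℝ} (ht0 : 0 ≤ t) (ht1 : t < 1) {m : ℝ} (hm : 0 < m) :
    ∃ u, t < u ∧ u ≤ 1 ∧ pvR f p t u < m := by
  by_contra hcon
  push_neg at hcon
  set v := (pVar f p).toReal with hv
  have hv0 : 0 ≤ v := ENNReal.toReal_nonneg
  -- choose B₁ with (2 B₁)^p < m/4
  have hcont : ContinuousAt (fun B : ℝ => (2 * B) ^ p) 0 := by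
    apply ContinuousAt.rpow_const
    · exact (continuous_const.mul continuous_id).continuousAt
    · right; linarith
  obtain ⟨η, hη0, hη⟩ := Metric.continuousAt_iff.mp hcont (m / 4) (by linarith)
  set B₁ := η / 2 with hB₁
  have hB₁0 : 0 < B₁ := by positivity
  have hB₁p : (2 * B₁) ^ p < m / 4 := by
    have hd : dist B₁ 0 < η := by
      rw [Real.dist_eq, sub_zero, abs_of_pos hB₁0]
      simp only [hB₁]
      linarith
    have := hη hd
    rw [Real.dist_eq] at this
    have e0 : (2 * (0:ℝ)) ^ p = 0 := by
      rw [mul_zero, Real.zero_rpow (by linarith : p ≠ 0)]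
    rw [e0, sub_zero, abs_of_nonneg (Real.rpow_nonneg (by linarith) p)] at this
    exact this
  -- δ from continuity of f at t
  obtain ⟨δ, hδ0, hδ⟩ := Metric.continuousAt_iff.mp hf.continuousAt B₁ hB₁0
  set δ₂ := min δ (1 - t) with hδ₂
  have hδ₂0 : 0 < δ₂ := lt_min hδ0 (by linarith)
  set u₀ := t + δ₂ / 2 with hu₀
  have hu₀t : t < u₀ := by simp only [hu₀]; linarith
  have hu₀1 : u₀ ≤ 1 := by
    have : δ₂ ≤ 1 - t := min_le_right _ _
    simp only [hu₀]; linarith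
  have hosc : ∀ a b : ℝ, a ∈ Set.Icc t u₀ → b ∈ Set.Icc t u₀ → |f a - f b| ≤ 2 * B₁ := by
    intro a b ha hb
    have hda : dist a t < δ := by
      rw [Real.dist_eq, abs_of_nonneg (by linarith [ha.1])]
      have h1 : a ≤ t + δ₂ / 2 := ha.2
      have h2 : δ₂ ≤ δ := min_le_left _ _
      linarith
    have hdb : dist b t < δ := by
      rw [Real.dist_eq, abs_of_nonneg (by linarith [hb.1])]
      have h1 : b ≤ t + δ₂ / 2 := hb.2
      have h2 : δ₂ ≤ δ := min_le_left _ _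
      linarith
    have h1 := hδ hda
    have h2 := hδ hdb
    rw [Real.dist_eq] at h1 h2
    calc |f a - f b| = |(f a - f t) - (f b - f t)| := by ring_nf
      _ ≤ |f a - f t| + |f b - f t| := abs_sub _ _
      _ ≤ 2 * B₁ := by linarith
  -- key step
  have step : ∀ u, t < u → u ≤ u₀ → ∃ u', t < u' ∧ u' < u ∧ m / 2 ≤ pvR f p u' u := by
    intro u htu huu₀
    have hu1 : u ≤ 1 := huu₀.trans hu₀1
    have hge : m ≤ pvR f p t u := hcon u htu hu1
    obtain ⟨r, hrS, hrgt⟩ := exists_lt_of_lt_csSup ⟨0, zero_mem_SS f p htu.le⟩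
      (show 3 / 4 * m < pvR f p t u by linarith)
    obtain ⟨n, y, hy, rfl⟩ := hrS
    have hterm : ∀ i, i < n → |f (y i) - f (y (i + 1))| ^ p < m / 4 := by
      intro i hi
      have h1 : y i ∈ Set.Icc t u₀ := by
        have := hy.2 i (by omega)
        exact ⟨this.1, this.2.trans huu₀⟩
      have h2 : y (i + 1) ∈ Set.Icc t u₀ := by
        have := hy.2 (i + 1) (by omega)
        exact ⟨this.1, this.2.trans huu₀⟩
      calc |f (y i) - f (y (i + 1))| ^ p ≤ (2 * B₁) ^ p :=
            Real.rpow_le_rpow (abs_nonneg _) (hosc _ _ h1 h2) (by linarith)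
        _ < m / 4 := hB₁p
    have hn2 : 2 ≤ n := by
      by_contra hn
      push_neg at hn
      interval_cases n
      · have : nSum f p 0 y = 0 := by simp [nSum]
        rw [this] at hrgt; linarith
      · have : nSum f p 1 y = |f (y 0) - f (y 1)| ^ p := by simp [nSum]
        rw [this] at hrgt
        have := hterm 0 (by omega)
        norm_num at this
        linarith
    refine ⟨y 1, lt_of_le_of_lt (hy.2 0 (by omega)).1 (hy.1 0 (by omega)), ?_, ?_⟩
    · calc y 1 < y 2 := hy.1 1 (by omega)
        _ ≤ u := (hy.2 2 (by omega)).2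
    · set yR : ℕ → ℝ := fun i => y (i + 1) with hyR
      have hpart : part (y 1) u (n - 1) yR := by
        constructor
        · intro i hi
          exact hy.1 (i + 1) (by omega)
        · intro i hi
          exact ⟨part_mono hy (by omega) (by omega), (hy.2 (i + 1) (by omega)).2⟩
      have hsum : nSum f p n y = |f (y 0) - f (y (0 + 1))| ^ p + nSum f p (n - 1) yR := by
        simp only [nSum, hyR]
        obtain ⟨n', rfl⟩ : ∃ n', n = n' + 1 := ⟨n - 1, by omega⟩
        rw [Finset.sum_range_succ']
        simp only [Nat.add_sub_cancel]
        rw [add_comm]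
      have hle := nSum_le_pvR hfin (ht0.trans (le_of_lt (lt_of_le_of_lt (hy.2 0 (by omega)).1
        (hy.1 0 (by omega))))) hu1 hpart
      have ht0' := hterm 0 (by omega)
      rw [hsum] at hrgt
      linarith
  -- build the decreasing sequence
  choose g hg1 hg2 hg3 using step
  set T := {x : ℝ // t < x ∧ x ≤ u₀} with hT
  have hFmem : ∀ x : T, t < g x.1 x.2.1 x.2.2 ∧ g x.1 x.2.1 x.2.2 ≤ u₀ := fun x =>
    ⟨hg1 x.1 x.2.1 x.2.2, (hg2 x.1 x.2.1 x.2.2).le.trans x.2.2⟩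
  set F : T → T := fun x => ⟨g x.1 x.2.1 x.2.2, hFmem x⟩ with hF
  set seq : ℕ → T := fun k => F^[k] ⟨u₀, hu₀t, le_rfl⟩ with hseq
  have hseqsucc : ∀ k, seq (k + 1) = F (seq k) := by
    intro k
    simp only [hseq, Function.iterate_succ_apply']
  have hdec : ∀ k, (seq (k + 1)).1 < (seq k).1 := by
    intro k
    rw [hseqsucc k]
    exact hg2 _ _ _
  have hvar : ∀ k, m / 2 ≤ pvR f p ((seq (k + 1)).1) ((seq k).1) := by
    intro k
    rw [hseqsucc k]
    exact hg3 _ _ _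
  -- chain inequality
  have hchain : ∀ N : ℕ, (N : ℝ) * (m / 2) ≤ pvR f p ((seq N).1) u₀ := by
    intro N
    induction N with
    | zero =>
      simp only [Nat.cast_zero, zero_mul]
      exact pvR_nonneg hfin (ht0.trans (seq 0).2.1.le) (seq 0).2.2 hu₀1
    | succ N ih =>
      have hglue := glue hfin (ht0.trans (seq (N + 1)).2.1.le) (hdec N).le
        ((seq N).2.2) hu₀1
      have : ((N : ℝ) + 1) * (m / 2) = m / 2 + (N : ℝ) * (m / 2) := by ring
      rw [Nat.cast_succ, this]
      calc m / 2 + (N : ℝ) * (m / 2)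
          ≤ pvR f p ((seq (N + 1)).1) ((seq N).1) + pvR f p ((seq N).1) u₀ := by
            linarith [hvar N, ih]
        _ ≤ pvR f p ((seq (N + 1)).1) u₀ := hglue
  obtain ⟨N, hN⟩ := exists_nat_gt (v / (m / 2))
  have hub := pvR_le_toReal hfin (ht0.trans (seq N).2.1.le) (seq N).2.2 hu₀1
  have := hchain N
  rw [← hv] at hub
  have hNv : v < (N : ℝ) * (m / 2) := by
    rw [div_lt_iff₀ (by linarith : (0:ℝ) < m / 2)] at hN
    linarith
  linarith

lemma right_approx {f : ℝ → ℝ} {p : ℝ} (hf : Continuous f) (hp : 1 ≤ p)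
    (hfin : pVar f p ≠ ⊤) {t : ℝ} (ht0 : 0 ≤ t) (ht1 : t < 1) {ε : ℝ} (hε : 0 < ε) :
    ∃ u, t < u ∧ u ≤ 1 ∧ pvR f p 0 u ≤ pvR f p 0 t + ε := by
  obtain ⟨δ, hδ0, hδ⟩ := right_split hf hp hfin ht0 ht1 (show (0:ℝ) < ε / 2 by linarith)
  obtain ⟨u₁, hu₁t, hu₁1, hu₁⟩ := small_var hf hp hfin ht0 ht1
    (show (0:ℝ) < ε / 2 by linarith)
  set u := min u₁ (t + δ) with hu
  have hut : t < u := lt_min hu₁t (by linarith)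
  have hu1 : u ≤ 1 := (min_le_left _ _).trans hu₁1
  have huδ : u ≤ t + δ := min_le_right _ _
  refine ⟨u, hut, hu1, ?_⟩
  have h1 := hδ u hut hu1 huδ
  have h2 : pvR f p t u ≤ pvR f p t u₁ :=
    pvR_mono hfin ht0 le_rfl hut.le (min_le_left _ _) hu₁1
  linarith

end TimeChange

/-- If a continuous circle mapping `f` has finite `p`-variation `v = V^p(f)` for some
`p ≥ 1`, then there is a circle homeomorphism `τ` such that `f ∘ τ` is `(1/p)`-Hölder,
indeed `|f∘τ(a) - f∘τ(b)| ≤ (2v)^{1/p} |a - b|^{1/p}`. -/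
theorem exists_timeChange_holder (f : ℝ → ℝ) (hf : Continuous f)
    (hper : ∀ x, f (x + 1) = f x) (p : ℝ) (hp : 1 ≤ p) (hfin : pVar f p ≠ ⊤) :
    ∃ τ : ℝ → ℝ, IsCircleHomeoLift τ ∧
      ∀ a ∈ Set.Icc (0 : ℝ) 1, ∀ b ∈ Set.Icc (0 : ℝ) 1,
        |f (τ a) - f (τ b)| ≤ (2 * (pVar f p).toReal) ^ (1 / p) * |a - b| ^ (1 / p) := by
  classical
  set v := (pVar f p).toReal with hv
  have hv0 : 0 ≤ v := ENNReal.toReal_nonneg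
  have hp0 : p ≠ 0 := by linarith
  rcases eq_or_lt_of_le hv0 with hveq | hvpos
  · -- degenerate case : v = 0, f is constant on [0,1]
    refine ⟨id, ⟨continuous_id, Function.bijective_id, Or.inl fun x => rfl⟩, ?_⟩
    intro a ha b hb
    have h2 := TimeChange.two_point hp hfin le_rfl le_rfl ha hb
    rw [TimeChange.pvR_eq_toReal hfin, ← hv, ← hveq] at h2
    have hz : |f a - f b| = 0 := by
      by_contra hne
      have habs : 0 < |f a - f b| := lt_of_le_of_ne (abs_nonneg _) (Ne.symm hne)
      have : 0 < |f a - f b| ^ p := Real.rpow_pos_of_pos habs p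
      linarith
    simp only [id_eq]
    rw [hz]
    positivity
  · -- main case : v > 0
    have h2v : (2 * v) ≠ 0 := by positivity
    set V : ℝ → ℝ := fun x => TimeChange.pvR f p 0 x with hV
    have hV0 : V 0 = 0 := TimeChange.pvR_self f 0
    have hV1 : V 1 = v := by rw [hv]; exact TimeChange.pvR_eq_toReal hfin
    have hVincr : ∀ x y : ℝ, 0 ≤ x → x ≤ y → y ≤ 1 → V x + |f x - f y| ^ p ≤ V y :=
      fun x y hx hxy hy => TimeChange.pvR_add_le hp hfin hx hxy hy
    have hVmono : ∀ x y : ℝ, 0 ≤ x → x ≤ y → y ≤ 1 → V x ≤ V y := by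
      intro x y hx hxy hy
      have := hVincr x y hx hxy hy
      have h0 : 0 ≤ |f x - f y| ^ p := Real.rpow_nonneg (abs_nonneg _) p
      linarith
    set h : ℝ → ℝ := fun x => (v * x + V x) / (2 * v) with hh
    have h0 : h 0 = 0 := by simp [hh, hV0]
    have h1 : h 1 = 1 := by
      simp only [hh, hV1, mul_one]
      field_simp
      ring
    have hmono : ∀ x y, 0 ≤ x → x < y → y ≤ 1 → h x < h y := by
      intro x y hx hxy hy
      have hm := hVmono x y hx hxy.le hy
      simp only [hh]
      rw [div_lt_div_iff_of_pos_right (by positivity)]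
      have hd : 0 < (v * y + V y) - (v * x + V x) := by nlinarith
      nlinarith [mul_pos hd (show (0:ℝ) < 2 * v by positivity)]
    have hmono' : ∀ x y, 0 ≤ x → x ≤ y → y ≤ 1 → h x ≤ h y := by
      intro x y hx hxy hy
      rcases eq_or_lt_of_le hxy with rfl | hlt
      · exact le_rfl
      · exact (hmono x y hx hlt hy).le
    -- surjectivity of h on [0,1]
    have hsurj01 : ∀ c ∈ Set.Icc (0:ℝ) 1, ∃ x, x ∈ Set.Icc (0:ℝ) 1 ∧ h x = c := by
      intro c hc
      set A := {x : ℝ | x ∈ Set.Icc (0:ℝ) 1 ∧ h x ≤ c} with hA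
      have hA0 : (0:ℝ) ∈ A := ⟨⟨le_rfl, zero_le_one⟩, by rw [h0]; exact hc.1⟩
      have hAbdd : BddAbove A := ⟨1, fun x hx => hx.1.2⟩
      set s := sSup A with hs
      have hs0 : 0 ≤ s := le_csSup hAbdd hA0
      have hs1 : s ≤ 1 := csSup_le ⟨0, hA0⟩ fun x hx => hx.1.2
      refine ⟨s, ⟨hs0, hs1⟩, ?_⟩
      by_contra hne
      rcases lt_or_gt_of_ne hne with hlt | hgt
      · -- h s < c
        have hs1' : s < 1 := by
          rcases eq_or_lt_of_le hs1 with heq | h'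
          · exfalso
            rw [heq, h1] at hlt
            exact absurd hlt (not_lt.mpr hc.2)
          · exact h'
        set ε' := v * (c - h s) / 2 with hε'
        have hε'pos : 0 < ε' := by
          have : 0 < c - h s := by linarith
          positivity
        obtain ⟨u, hsu, hu1, hVu⟩ := TimeChange.right_approx hf hp hfin hs0 hs1' hε'pos
        set u'' := min u (s + ε' / v) with hu''
        have hu''s : s < u'' := by
          apply lt_min hsu
          have : 0 < ε' / v := by positivity
          linarith
        have hu''1 : u'' ≤ 1 := (min_le_left _ _).trans hu1
        have hu''0 : 0 ≤ u'' := hs0.trans hu''s.le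
        have hVu'' : V u'' ≤ V s + ε' := by
          have := hVmono u'' u hu''0 (min_le_left _ _) hu1
          simp only [hV] at this hVu ⊢
          linarith
        have hdist : u'' - s ≤ ε' / v := by
          have := min_le_right u (s + ε' / v)
          linarith
        have hhu'' : h u'' ≤ c := by
          have hcomp : h u'' - h s = (v * (u'' - s) + (V u'' - V s)) / (2 * v) := by
            simp only [hh]
            field_simp
            ring
          have hb1 : v * (u'' - s) ≤ ε' := by
            rw [le_div_iff₀ hvpos] at hdist
            nlinarith
          have hb2 : V u'' - V s ≤ ε' := by linarith
          have : h u'' - h s ≤ (ε' + ε') / (2 * v) := by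
            rw [hcomp]
            apply div_le_div_of_nonneg_right ?_ (by positivity)
            · linarith
          have heps : (ε' + ε') / (2 * v) = (c - h s) / 2 := by
            rw [hε']
            field_simp
            ring
          rw [heps] at this
          linarith
        have : u'' ≤ s := le_csSup hAbdd ⟨⟨hu''0, hu''1⟩, hhu''⟩
        linarith
      · -- h s > c
        have hs0' : 0 < s := by
          rcases eq_or_lt_of_le hs0 with heq | h'
          · exfalso
            rw [← heq, h0] at hgt
            linarith [hc.1]
          · exact h'
        set ε' := v * (h s - c) / 2 with hε'
        have hε'pos : 0 < ε' := by
          have : 0 < h s - c := by linarith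
          positivity
        obtain ⟨w, hw0, hws, hVw⟩ := TimeChange.left_approx hf hp hfin hs0' hs1 hε'pos
        set w' := max w (s - ε' / v) with hw'
        have hw's : w' < s := by
          apply max_lt hws
          have : 0 < ε' / v := by positivity
          linarith
        obtain ⟨x, hxA, hxw'⟩ := exists_lt_of_lt_csSup ⟨0, hA0⟩ (show w' < sSup A from hw's)
        have hxs : x ≤ s := le_csSup hAbdd hxA
        have hVx : V s ≤ V x + ε' := by
          have hwx : w ≤ x := (le_max_left _ _).trans hxw'.le
          have := hVmono w x hw0 hwx hxA.1.2
          simp only [hV] at this hVw ⊢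
          linarith
        have hsx : s - x ≤ ε' / v := by
          have := le_max_right w (s - ε' / v)
          linarith [hxw'.le]
        have hhx : c < h x := by
          have hcomp : h s - h x = (v * (s - x) + (V s - V x)) / (2 * v) := by
            simp only [hh]
            field_simp
            ring
          have hb1 : v * (s - x) ≤ ε' := by
            rw [le_div_iff₀ hvpos] at hsx
            nlinarith
          have hb2 : V s - V x ≤ ε' := by linarith
          have : h s - h x ≤ (ε' + ε') / (2 * v) := by
            rw [hcomp]
            apply div_le_div_of_nonneg_right ?_ (by positivity)
            linarith
          have heps : (ε' + ε') / (2 * v) = (h s - c) / 2 := by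
            rw [hε']
            field_simp
            ring
          rw [heps] at this
          linarith
        exact absurd hxA.2 (not_le.mpr hhx)
    -- the lift H
    set H : ℝ → ℝ := fun x => (⌊x⌋ : ℝ) + h (Int.fract x) with hH
    have hhfract : ∀ x : ℝ, 0 ≤ h (Int.fract x) ∧ h (Int.fract x) < 1 := by
      intro x
      constructor
      · rw [← h0]
        exact hmono' 0 _ le_rfl (Int.fract_nonneg x) (Int.fract_lt_one x).le
      · rw [← h1]
        exact hmono _ 1 (Int.fract_nonneg x) (Int.fract_lt_one x) le_rfl
    have hHeq : ∀ x ∈ Set.Icc (0:ℝ) 1, H x = h x := by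
      intro x hx
      rcases eq_or_lt_of_le hx.2 with heq | hlt
      · rw [heq]
        simp only [hH, Int.floor_one, Int.fract_one, Int.cast_one, h0, h1]
        norm_num
      · have hfl : ⌊x⌋ = 0 := Int.floor_eq_zero_iff.mpr ⟨hx.1, hlt⟩
        have hfr : Int.fract x = x := Int.fract_eq_self.mpr ⟨hx.1, hlt⟩
        simp [hH, hfl, hfr]
    have hHsm : StrictMono H := by
      intro x y hxy
      have hfx := hhfract x
      have hfy := hhfract y
      have hfl : ⌊x⌋ ≤ ⌊y⌋ := Int.floor_le_floor hxy.le
      rcases eq_or_lt_of_le hfl with heq | hlt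
      · have hfr : Int.fract x < Int.fract y := by
          simp only [Int.fract, heq]
          linarith
        have hcast : ((⌊x⌋ : ℤ) : ℝ) = ((⌊y⌋ : ℤ) : ℝ) := by exact_mod_cast heq
        have := hmono (Int.fract x) (Int.fract y) (Int.fract_nonneg x) hfr
          (Int.fract_lt_one y).le
        simp only [hH]
        linarith
      · have hcast : ((⌊x⌋ : ℤ) : ℝ) + 1 ≤ ((⌊y⌋ : ℤ) : ℝ) := by exact_mod_cast hlt
        simp only [hH]
        linarith [hfx.2, hfy.1]
    have hHsurj : Function.Surjective H := by
      intro c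
      obtain ⟨x₀, hx₀mem, hx₀⟩ := hsurj01 (Int.fract c)
        ⟨Int.fract_nonneg c, (Int.fract_lt_one c).le⟩
      have hx₀lt : x₀ < 1 := by
        rcases eq_or_lt_of_le hx₀mem.2 with heq | hlt
        · exfalso
          rw [heq, h1] at hx₀
          exact absurd hx₀.symm (Int.fract_lt_one c).ne
        · exact hlt
      refine ⟨(⌊c⌋ : ℝ) + x₀, ?_⟩
      have hfl : ⌊(⌊c⌋ : ℝ) + x₀⌋ = ⌊c⌋ := by
        rw [Int.floor_intCast_add, Int.floor_eq_zero_iff.mpr ⟨hx₀mem.1, hx₀lt⟩, add_zero]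
      have hfr : Int.fract ((⌊c⌋ : ℝ) + x₀) = x₀ := by
        rw [Int.fract_intCast_add, Int.fract_eq_self.mpr ⟨hx₀mem.1, hx₀lt⟩]
      simp only [hH, hfl, hfr, hx₀]
      exact Int.floor_add_fract c
    have hHadd : ∀ x, H (x + 1) = H x + 1 := by
      intro x
      simp only [hH, Int.floor_add_one, Int.fract_add_one]
      push_cast
      ring
    set e : ℝ ≃o ℝ := StrictMono.orderIsoOfSurjective H hHsm hHsurj with he
    have hecoe : ∀ x, e x = H x := fun x => rfl
    have happly : ∀ c, H (e.symm c) = c := by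
      intro c
      rw [← hecoe]
      exact e.apply_symm_apply c
    refine ⟨fun c => e.symm c, ⟨?_, ?_, Or.inl ?_⟩, ?_⟩
    · exact e.symm.continuous
    · exact e.symm.bijective
    · intro x
      apply hHsm.injective
      rw [happly, hHadd, happly]
    · -- the Hölder bound
      have hH0 : H 0 = 0 := by rw [hHeq 0 ⟨le_rfl, zero_le_one⟩, h0]
      have hH1 : H 1 = 1 := by rw [hHeq 1 ⟨zero_le_one, le_rfl⟩, h1]
      have hmem : ∀ {c : ℝ}, c ∈ Set.Icc (0:ℝ) 1 → e.symm c ∈ Set.Icc (0:ℝ) 1 := by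
        intro c hc
        constructor
        · by_contra hcon
          push_neg at hcon
          have := hHsm hcon
          rw [happly, hH0] at this
          linarith [hc.1]
        · by_contra hcon
          push_neg at hcon
          have := hHsm hcon
          rw [happly, hH1] at this
          linarith [hc.2]
      have key : ∀ x y : ℝ, x ∈ Set.Icc (0:ℝ) 1 → y ∈ Set.Icc (0:ℝ) 1 → x ≤ y →
          |f x - f y| ≤ (2 * v) ^ (1/p) * (H y - H x) ^ (1/p) := by
        intro x y hx hy hxy
        have hincr := hVincr x y hx.1 hxy hy.2
        have hH' : H y - H x = h y - h x := by rw [hHeq x hx, hHeq y hy]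
        have hhxy : 0 ≤ h y - h x := by
          have := hmono' x y hx.1 hxy hy.2
          linarith
        have hcomp : h y - h x = (v * (y - x) + (V y - V x)) / (2 * v) := by
          simp only [hh]
          field_simp
          ring
        have hVle : V y - V x ≤ 2 * v * (h y - h x) := by
          rw [hcomp, mul_div_cancel₀ _ h2v]
          nlinarith [sub_nonneg.mpr hxy]
        have hfp : |f x - f y| ^ p ≤ 2 * v * (h y - h x) := by linarith
        have hroot := TimeChange.rpow_root_le hp (abs_nonneg _)
          (by positivity : (0:ℝ) ≤ 2 * v * (h y - h x)) hfp
        rw [Real.mul_rpow (by positivity) hhxy] at hroot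
        rw [hH']
        exact hroot
      intro a ha b hb
      simp only
      rcases le_total (e.symm a) (e.symm b) with hxy | hxy
      · have hk := key _ _ (hmem ha) (hmem hb) hxy
        rw [happly, happly] at hk
        have hab : a ≤ b := by
          have := hmono'  -- a ≤ b from monotonicity of H on the preimages
          by_contra hcon
          push_neg at hcon
          rcases eq_or_lt_of_le hxy with heq | hlt
          · have : a = b := by
              rw [← happly a, ← happly b, heq]
            linarith
          · have := hHsm hlt
            rw [happly, happly] at this
            linarith
        have habs : |a - b| = b - a := by
          rw [abs_sub_comm, abs_of_nonneg (by linarith)]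
        rw [habs]
        exact hk
      · have hk := key _ _ (hmem hb) (hmem ha) hxy
        rw [happly, happly] at hk
        have hab : b ≤ a := by
          by_contra hcon
          push_neg at hcon
          rcases eq_or_lt_of_le hxy with heq | hlt
          · have : b = a := by
              rw [← happly b, ← happly a, heq]
            linarith
          · have := hHsm hlt
            rw [happly, happly] at this
            linarith
        have habs : |a - b| = a - b := abs_of_nonneg (by linarith)
        rw [habs, abs_sub_comm]
        exact hk

end
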